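/- Let f be a homogeneous element of degree n in the free unital magma algebra K{X} with diagonal Δ_a. Then f is primitive (Δ_a(f) = f⊗1 + 1⊗f) if and only if ∂_T(f) = 0 for all tree monomials T of degree d with 1 ≤ d < (n+1)/2. -/

import Mathlib

noncomputable section

/-- Basis of the free unital magma algebra on `X`. -/
abbrev MagW (X : Type) := WithOne (FreeMagma X)

/-- The free unital magma algebra `K{X}`. -/
abbrev MagA (K X : Type) [Semiring K] := MagW X →₀ K

/-- The (non-associative) convolution product on `K{X}`. -/
def mulA {K X : Type} [Semiring K] (f g : MagA K X) : MagA K X :=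
  f.sum fun a c => g.sum fun b d => Finsupp.single (a * b) (c * d)

/-- The componentwise product on `K{X} ⊗ K{X}`. -/
def mulA2 {K X : Type} [Semiring K] (f g : (MagW X × MagW X) →₀ K) :
    (MagW X × MagW X) →₀ K :=
  f.sum fun a c => g.sum fun b d => Finsupp.single (a.1 * b.1, a.2 * b.2) (c * d)

/-- The number of leaves of a planar binary tree. -/
def nl {X : Type} : FreeMagma X → ℕ
  | .of _ => 1
  | .mul a b => nl a + nl b

/-- Degree of a monomial of `K{X}` (number of leaves; the unit has degree 0). -/
def degW {X : Type} : MagW X → ℕ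
  | 1 => 0
  | (t : FreeMagma X) => nl t

/-- `f` is homogeneous of degree `n`. -/
def Homog {K X : Type} [Semiring K] (f : MagA K X) (n : ℕ) : Prop :=
  ∀ t ∈ f.support, degW t = n

/-- `f` is primitive: `Δ(f) = f ⊗ 1 + 1 ⊗ f`. -/
def IsPrim {K X : Type} [Semiring K]
    (Δ : MagA K X →ₗ[K] ((MagW X × MagW X) →₀ K)) (f : MagA K X) : Prop :=
  Δ f = f.mapDomain (fun a => (a, (1 : MagW X))) +
    f.mapDomain (fun a => ((1 : MagW X), a))

lemma mulW_eq_one {X : Type} {u v : MagW X} (h : u * v = 1) : u = 1 ∧ v = 1 := by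
  induction u using WithOne.recOneCoe with
  | one => rw [one_mul] at h; exact ⟨rfl, h⟩
  | coe a =>
    induction v using WithOne.recOneCoe with
    | one => rw [mul_one] at h; exact ⟨h, rfl⟩
    | coe b => rw [← WithOne.coe_mul] at h; exact absurd h WithOne.coe_ne_one

lemma degW_mul {X : Type} (u v : MagW X) : degW (u * v) = degW u + degW v := by
  induction u using WithOne.recOneCoe with
  | one => rw [one_mul, show degW (1:MagW X) = 0 from rfl, Nat.zero_add]
  | coe a =>
    induction v using WithOne.recOneCoe with
    | one => rw [mul_one]; rfl
    | coe b => rw [← WithOne.coe_mul]; show nl (a*b) = nl a + nl b; rfl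

lemma nl_pos {X : Type} (t : FreeMagma X) : 1 ≤ nl t := by
  induction t with
  | ih1 x => exact le_refl 1
  | ih2 a b iha ihb => show 1 ≤ nl a + nl b; omega

lemma mulA_single_single {K X : Type} [Semiring K] (u v : MagW X) (c d : K) :
    mulA (Finsupp.single u c) (Finsupp.single v d) = Finsupp.single (u*v) (c*d) := by
  classical
  unfold mulA
  rw [Finsupp.sum_single_index, Finsupp.sum_single_index]
  · simp
  · simp

open scoped Classical in
lemma mulA2_apply {K X : Type} [Semiring K] (F G : (MagW X × MagW X) →₀ K)
    (p : MagW X × MagW X) :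
    mulA2 F G p = ∑ u ∈ F.support, ∑ v ∈ G.support,
      if (u.1 * v.1, u.2 * v.2) = p then F u * G v else 0 := by
  classical
  rw [mulA2, Finsupp.sum_apply]
  rw [Finsupp.sum]
  refine Finset.sum_congr rfl fun u hu => ?_
  rw [Finsupp.sum_apply, Finsupp.sum]
  refine Finset.sum_congr rfl fun v hv => ?_
  rw [Finsupp.single_apply]

lemma mapDomain_swap_mulA2 {K X : Type} [Semiring K] (F G : (MagW X × MagW X) →₀ K) :
    Finsupp.mapDomain Prod.swap (mulA2 F G)
      = mulA2 (Finsupp.mapDomain Prod.swap F) (Finsupp.mapDomain Prod.swap G) := by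
  classical
  unfold mulA2
  rw [Finsupp.mapDomain_sum, Finsupp.sum_mapDomain_index_inj Prod.swap_injective]
  refine Finsupp.sum_congr fun u _ => ?_
  rw [Finsupp.mapDomain_sum, Finsupp.sum_mapDomain_index_inj Prod.swap_injective]
  refine Finsupp.sum_congr fun v _ => ?_
  rw [Finsupp.mapDomain_single]
  rfl

/-- Key structural facts about `Δ` on tree monomials. -/
lemma keyD {K X : Type} [Field K]
    (Δ : MagA K X →ₗ[K] ((MagW X × MagW X) →₀ K))
    (hΔmul : ∀ f g : MagA K X, Δ (mulA f g) = mulA2 (Δ f) (Δ g))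
    (hΔx : ∀ x : X, Δ (Finsupp.single (↑(FreeMagma.of x)) 1) =
      Finsupp.single ((↑(FreeMagma.of x) : MagW X), (1 : MagW X)) 1 +
        Finsupp.single ((1 : MagW X), (↑(FreeMagma.of x) : MagW X)) 1)
    (T : FreeMagma X) :
    (Finsupp.mapDomain Prod.swap (Δ (Finsupp.single (↑T) 1)) = Δ (Finsupp.single (↑T) 1))
  ∧ (∀ p : MagW X × MagW X, Δ (Finsupp.single (↑T) 1) p ≠ 0 → degW p.1 + degW p.2 = nl T)
  ∧ (∀ s : MagW X, Δ (Finsupp.single (↑T) 1) (s, 1)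
      = Finsupp.single (↑T : MagW X) (1:K) s) := by
  classical
  induction T with
  | ih1 x =>
    rw [hΔx x]
    refine ⟨?_, ?_, ?_⟩
    · rw [Finsupp.mapDomain_add, Finsupp.mapDomain_single, Finsupp.mapDomain_single]
      exact add_comm _ _
    · rintro ⟨s, t⟩ hp
      rw [Finsupp.add_apply, Finsupp.single_apply, Finsupp.single_apply] at hp
      show degW s + degW t = 1
      by_cases h1 : ((↑(FreeMagma.of x) : MagW X), (1 : MagW X)) = (s, t)
      · obtain ⟨rfl, rfl⟩ : (↑(FreeMagma.of x) : MagW X) = s ∧ (1 : MagW X) = t :=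
          ⟨congrArg Prod.fst h1, congrArg Prod.snd h1⟩
        rfl
      · rw [if_neg h1] at hp
        by_cases h2 : ((1 : MagW X), (↑(FreeMagma.of x) : MagW X)) = (s, t)
        · obtain ⟨rfl, rfl⟩ : (1 : MagW X) = s ∧ (↑(FreeMagma.of x) : MagW X) = t :=
            ⟨congrArg Prod.fst h2, congrArg Prod.snd h2⟩
          rfl
        · rw [if_neg h2] at hp; simp at hp
    · intro s
      rw [Finsupp.add_apply, Finsupp.single_apply, Finsupp.single_apply,
        Finsupp.single_apply]
      have h2 : ¬ (((1 : MagW X), (↑(FreeMagma.of x) : MagW X)) = (s, (1 : MagW X))) := by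
        intro h
        exact WithOne.coe_ne_one (congrArg Prod.snd h)
      rw [if_neg h2, add_zero]
      by_cases h1 : (↑(FreeMagma.of x) : MagW X) = s
      · rw [if_pos h1, if_pos (by rw [h1])]
      · rw [if_neg h1, if_neg (by intro h; exact h1 (congrArg Prod.fst h))]
  | ih2 a b iha ihb =>
    obtain ⟨iha1, iha2, iha3⟩ := iha
    obtain ⟨ihb1, ihb2, ihb3⟩ := ihb
    have hD : Δ (Finsupp.single (↑(a * b)) (1:K))
        = mulA2 (Δ (Finsupp.single (↑a) 1)) (Δ (Finsupp.single (↑b) 1)) := by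
      rw [← hΔmul, mulA_single_single, one_mul]
      rfl
    set F := Δ (Finsupp.single (↑a) (1:K)) with hF
    set G := Δ (Finsupp.single (↑b) (1:K)) with hG
    have hFa : F ((↑a : MagW X), (1 : MagW X)) = 1 := by
      rw [iha3, Finsupp.single_eq_same]
    have hGb : G ((↑b : MagW X), (1 : MagW X)) = 1 := by
      rw [ihb3, Finsupp.single_eq_same]
    refine ⟨?_, ?_, ?_⟩
    · rw [hD, mapDomain_swap_mulA2, iha1, ihb1]
    · rintro ⟨s, t⟩ hp
      rw [hD, mulA2_apply] at hp
      obtain ⟨u, hu, hu2⟩ := Finset.exists_ne_zero_of_sum_ne_zero hp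
      obtain ⟨v, hv, hv2⟩ := Finset.exists_ne_zero_of_sum_ne_zero hu2
      have hc : (u.1 * v.1, u.2 * v.2) = (s, t) := by
        by_contra hc
        rw [if_neg hc] at hv2
        exact hv2 rfl
      have hc1 : u.1 * v.1 = s := congrArg Prod.fst hc
      have hc2 : u.2 * v.2 = t := congrArg Prod.snd hc
      have ha' := iha2 u (Finsupp.mem_support_iff.mp hu)
      have hb' := ihb2 v (Finsupp.mem_support_iff.mp hv)
      show degW s + degW t = nl (a * b)
      rw [← hc1, ← hc2, degW_mul, degW_mul,
        show nl (a * b) = nl a + nl b from rfl]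
      omega
    · intro s
      rw [hD, mulA2_apply]
      have key : ∀ u ∈ F.support, ∀ v ∈ G.support,
          (if (u.1 * v.1, u.2 * v.2) = (s, 1) then F u * G v else 0)
            = (if v = ((↑b : MagW X), (1 : MagW X)) then
                (if u = ((↑a : MagW X), (1 : MagW X)) then
                  (if (↑(a * b) : MagW X) = s then (1:K) else 0) else 0) else 0) := by
        intro u hu v hv
        by_cases hv1 : v = ((↑b : MagW X), (1 : MagW X))
        · rw [if_pos hv1]
          by_cases hu1 : u = ((↑a : MagW X), (1 : MagW X))
          · rw [if_pos hu1]
            subst hu1; subst hv1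
            show (if ((↑a : MagW X) * ↑b, (1 : MagW X) * 1) = (s, 1)
                then F ((↑a : MagW X), 1) * G ((↑b : MagW X), 1) else 0)
              = if (↑(a * b) : MagW X) = s then (1:K) else 0
            rw [hFa, hGb, mul_one, mul_one,
              show ((↑a : MagW X) * ↑b) = (↑(a * b) : MagW X) from (WithOne.coe_mul a b).symm]
            by_cases hs : (↑(a * b) : MagW X) = s
            · rw [if_pos (by rw [hs]), if_pos hs]
            · rw [if_neg (fun h => hs (congrArg Prod.fst h)), if_neg hs]
          · rw [if_neg hu1]
            by_cases hu2 : u.2 = 1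
            · exfalso
              have hFu := Finsupp.mem_support_iff.mp hu
              have : u = (u.1, (1 : MagW X)) := by rw [← hu2]
              rw [this, iha3, Finsupp.single_apply] at hFu
              have hne : ¬ ((↑a : MagW X) = u.1) := by
                intro h
                exact hu1 (by rw [this, ← h])
              rw [if_neg hne] at hFu
              exact hFu rfl
            · rw [if_neg]
              intro h
              exact hu2 (mulW_eq_one (congrArg Prod.snd h)).1
        · rw [if_neg hv1]
          by_cases hv2 : v.2 = 1
          · exfalso
            have hGv := Finsupp.mem_support_iff.mp hv
            have : v = (v.1, (1 : MagW X)) := by rw [← hv2]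
            rw [this, ihb3, Finsupp.single_apply] at hGv
            have hne : ¬ ((↑b : MagW X) = v.1) := by
              intro h
              exact hv1 (by rw [this, ← h])
            rw [if_neg hne] at hGv
            exact hGv rfl
          · rw [if_neg]
            intro h
            exact hv2 (mulW_eq_one (congrArg Prod.snd h)).2
      have hGmem : ((↑b : MagW X), (1 : MagW X)) ∈ G.support :=
        Finsupp.mem_support_iff.mpr (by rw [hGb]; exact one_ne_zero)
      have hFmem : ((↑a : MagW X), (1 : MagW X)) ∈ F.support :=
        Finsupp.mem_support_iff.mpr (by rw [hFa]; exact one_ne_zero)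
      rw [Finset.sum_congr rfl (fun u hu => Finset.sum_congr rfl (fun v hv => key u hu v hv))]
      rw [Finset.sum_congr rfl
        (fun u (hu : u ∈ F.support) => Finset.sum_ite_eq' G.support _ _)]
      rw [Finset.sum_congr rfl (fun u (_ : u ∈ F.support) => if_pos hGmem)]
      rw [Finset.sum_ite_eq' F.support _ _, if_pos hFmem, Finsupp.single_apply]

/-- Let `f` be homogeneous of degree `n ≥ 1` in the free unital magma
algebra `K{X}` with diagonal `Δ_a`. Then `f` is primitive iff `∂_T(f) = 0` for all tree
monomials `T` of degree `d` with `1 ≤ d < (n+1)/2`, where the operators `∂_T` are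
defined by `Δ_a(f) = ∑_T T ⊗ ∂_T(f)`. -/
theorem stmt11 (K X : Type) [Field K] [CharZero K]
    (Δ : MagA K X →ₗ[K] ((MagW X × MagW X) →₀ K))
    (hΔ1 : Δ (Finsupp.single 1 1) = Finsupp.single (1, 1) 1)
    (hΔmul : ∀ f g : MagA K X, Δ (mulA f g) = mulA2 (Δ f) (Δ g))
    (hΔx : ∀ x : X, Δ (Finsupp.single (↑(FreeMagma.of x)) 1) =
      Finsupp.single ((↑(FreeMagma.of x) : MagW X), (1 : MagW X)) 1 +
        Finsupp.single ((1 : MagW X), (↑(FreeMagma.of x) : MagW X)) 1)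
    (dop : MagW X → (MagA K X →ₗ[K] MagA K X))
    (hdop : ∀ (f : MagA K X) (s t : MagW X), Δ f (s, t) = dop s f t)
    (f : MagA K X) (n : ℕ) (hn : 1 ≤ n) (hf : Homog f n) :
    IsPrim Δ f ↔
      ∀ T : FreeMagma X, 1 ≤ nl T → 2 * nl T < n + 1 →
        dop (↑T) f = 0 := by
  classical
  have hswapinj : Function.Injective (Prod.swap : MagW X × MagW X → MagW X × MagW X) :=
    Prod.swap_injective
  have key := fun T : FreeMagma X => keyD Δ hΔmul hΔx T
  have hfp : ∀ p : MagW X × MagW X,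
      Δ f p = f.sum fun w c => c * Δ (Finsupp.single w 1) p := by
    intro p
    conv_lhs => rw [← Finsupp.sum_single f]
    rw [map_finsuppSum, Finsupp.sum_apply]
    refine Finsupp.sum_congr fun w hw => ?_
    have h1 : Finsupp.single w (f w) = (f w) • Finsupp.single w (1:K) := by
      rw [Finsupp.smul_single, smul_eq_mul, mul_one]
    rw [h1, map_smul, Finsupp.smul_apply, smul_eq_mul]
  have hsupp : ∀ w ∈ f.support, ∃ T : FreeMagma X, w = ↑T ∧ nl T = n := by
    intro w hw
    induction w using WithOne.recOneCoe with
    | one =>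
      have := hf 1 hw
      rw [show degW (1:MagW X) = 0 from rfl] at this
      omega
    | coe t => exact ⟨t, rfl, hf (↑t) hw⟩
  have hfne : ∀ w : MagW X, degW w ≠ n → f w = 0 := by
    intro w h
    by_contra h2
    exact h (hf w (Finsupp.mem_support_iff.mpr h2))
  have F1 : ∀ s t : MagW X, Δ f (s, t) = Δ f (t, s) := by
    intro s t
    rw [hfp (s, t), hfp (t, s)]
    refine Finsupp.sum_congr fun w hw => ?_
    obtain ⟨T, rfl, hT⟩ := hsupp w hw
    congr 1
    have h1 := Finsupp.mapDomain_apply hswapinj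
      (Δ (Finsupp.single (↑T : MagW X) (1:K))) (s, t)
    rw [(key T).1] at h1
    exact h1.symm
  have F2 : ∀ s t : MagW X, Δ f (s, t) ≠ 0 → degW s + degW t = n := by
    intro s t h
    rw [hfp (s, t), Finsupp.sum] at h
    obtain ⟨w, hw, hw2⟩ := Finset.exists_ne_zero_of_sum_ne_zero h
    obtain ⟨T, rfl, hT⟩ := hsupp w hw
    have h2 := (key T).2.1 (s, t) (right_ne_zero_of_mul hw2)
    rw [hT] at h2
    exact h2
  have F3 : ∀ s : MagW X, Δ f (s, 1) = f s := by
    intro s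
    rw [hfp (s, 1)]
    have h1 : (f.sum fun w c => c * Δ (Finsupp.single w 1) (s, 1))
        = f.sum fun w c => if w = s then c else 0 := by
      refine Finsupp.sum_congr fun w hw => ?_
      obtain ⟨T, rfl, hT⟩ := hsupp w hw
      rw [(key T).2.2 s, Finsupp.single_apply]
      by_cases h : (↑T : MagW X) = s
      · rw [if_pos h, if_pos h, mul_one]
      · rw [if_neg h, if_neg h, mul_zero]
    rw [h1, Finsupp.sum_ite_eq' f s (fun _ c => c)]
    by_cases h : s ∈ f.support
    · rw [if_pos h]
    · rw [if_neg h, Finsupp.notMem_support_iff.mp h]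
  have F3' : ∀ t : MagW X, Δ f (1, t) = f t := by
    intro t
    rw [F1]
    exact F3 t
  have hinj1 : Function.Injective (fun a : MagW X => (a, (1:MagW X))) :=
    fun a b h => congrArg Prod.fst h
  have hinj2 : Function.Injective (fun a : MagW X => ((1:MagW X), a)) :=
    fun a b h => congrArg Prod.snd h
  have hR1 : ∀ p : MagW X × MagW X, p.2 ≠ 1 →
      Finsupp.mapDomain (fun a : MagW X => (a, (1:MagW X))) f p = 0 := by
    intro p hp
    refine Finsupp.mapDomain_notin_range _ _ ?_
    rintro ⟨a, rfl⟩
    exact hp rfl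
  have hR2 : ∀ p : MagW X × MagW X, p.1 ≠ 1 →
      Finsupp.mapDomain (fun a : MagW X => ((1:MagW X), a)) f p = 0 := by
    intro p hp
    refine Finsupp.mapDomain_notin_range _ _ ?_
    rintro ⟨a, rfl⟩
    exact hp rfl
  constructor
  · intro hp T h1 h2
    have hp' : Δ f = Finsupp.mapDomain (fun a : MagW X => (a, (1:MagW X))) f
        + Finsupp.mapDomain (fun a : MagW X => ((1:MagW X), a)) f := hp
    ext t
    rw [← hdop f (↑T) t, hp', Finsupp.add_apply]
    have e1 : Finsupp.mapDomain (fun a : MagW X => (a, (1:MagW X))) f (↑T, t) = 0 := by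
      by_cases ht : t = 1
      · subst ht
        have e0 : Finsupp.mapDomain (fun a : MagW X => (a, (1:MagW X))) f
            ((↑T : MagW X), (1:MagW X)) = f ↑T := Finsupp.mapDomain_apply hinj1 f ↑T
        rw [e0]
        refine hfne _ ?_
        rw [show degW (↑T : MagW X) = nl T from rfl]
        omega
      · exact hR1 (↑T, t) ht
    have e2 : Finsupp.mapDomain (fun a : MagW X => ((1:MagW X), a)) f (↑T, t) = 0 :=
      hR2 (↑T, t) WithOne.coe_ne_one
    rw [e1, e2, add_zero, Finsupp.coe_zero, Pi.zero_apply]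
  · intro h
    show Δ f = Finsupp.mapDomain (fun a : MagW X => (a, (1:MagW X))) f
        + Finsupp.mapDomain (fun a : MagW X => ((1:MagW X), a)) f
    ext p
    obtain ⟨s, t⟩ := p
    rw [Finsupp.add_apply]
    by_cases hs : s = 1
    · subst hs
      by_cases ht : t = 1
      · subst ht
        have e1 : Finsupp.mapDomain (fun a : MagW X => (a, (1:MagW X))) f
            ((1:MagW X), (1:MagW X)) = f 1 := Finsupp.mapDomain_apply hinj1 f 1
        have e2 : Finsupp.mapDomain (fun a : MagW X => ((1:MagW X), a)) f
            ((1:MagW X), (1:MagW X)) = f 1 := Finsupp.mapDomain_apply hinj2 f 1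
        rw [e1, e2, F3' 1, hfne 1 (by rw [show degW (1:MagW X) = 0 from rfl]; omega),
          add_zero]
      · have e2 : Finsupp.mapDomain (fun a : MagW X => ((1:MagW X), a)) f
            ((1:MagW X), t) = f t := Finsupp.mapDomain_apply hinj2 f t
        rw [hR1 (1, t) ht, e2, F3' t, zero_add]
    · by_cases ht : t = 1
      · subst ht
        have e1 : Finsupp.mapDomain (fun a : MagW X => (a, (1:MagW X))) f
            (s, (1:MagW X)) = f s := Finsupp.mapDomain_apply hinj1 f s
        rw [e1, hR2 (s, 1) hs, F3 s, add_zero]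
      · rw [hR1 (s, t) ht, hR2 (s, t) hs, add_zero]
        obtain ⟨S, rfl⟩ := WithOne.ne_one_iff_exists.mp hs
        obtain ⟨Tt, rfl⟩ := WithOne.ne_one_iff_exists.mp ht
        by_cases hdeg : nl S + nl Tt = n
        · rcases (show 2 * nl S ≤ n ∨ 2 * nl Tt ≤ n by omega) with hc | hc
          · rw [hdop f (↑S) (↑Tt), h S (nl_pos S) (by omega), Finsupp.coe_zero,
              Pi.zero_apply]
          · rw [F1, hdop f (↑Tt) (↑S), h Tt (nl_pos Tt) (by omega), Finsupp.coe_zero,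
              Pi.zero_apply]
        · by_contra hne
          have h2 := F2 (↑S) (↑Tt) hne
          exact hdeg h2

end
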